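/- For X extensible, if 1 ≤ i ≤ n−d+1 then a_{n−i+1} ≡ −iΔ modulo det(C(X_n)), where (a_i) is the sequence satisfying (−Δ)ω_i^{(n)} ≡ a_i ω_n^{(n)} mod Q(X_n). Equivalently, a_{n−i+1} = det(C(X_{n−i})) = det(C(X_n)) − iΔ. -/

import Mathlib

open scoped BigOperators

def Xmat (d : ℕ) (C : Matrix (Fin d) (Fin d) ℤ) (n : ℕ) : Matrix (Fin n) (Fin n) ℤ :=
  Matrix.of fun i j =>
    if h : (i : ℕ) < d ∧ (j : ℕ) < d then C ⟨i, h.1⟩ ⟨j, h.2⟩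
    else if (i : ℕ) = (j : ℕ) then 2
    else if (i : ℕ) + 1 = (j : ℕ) ∨ (j : ℕ) + 1 = (i : ℕ) then -1
    else 0

def detX (d : ℕ) (C : Matrix (Fin d) (Fin d) ℤ) (n : ℕ) : ℤ := (Xmat d C n).det

def Δdiff (d : ℕ) (C : Matrix (Fin d) (Fin d) ℤ) : ℤ := detX d C d - detX d C (d - 1)

def Extensible (d : ℕ) (C : Matrix (Fin d) (Fin d) ℤ) : Prop :=
  Δdiff d C ≠ 0 ∧ detX d C d ≠ 0 ∧ IsCoprime (Δdiff d C) (detX d C d)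

def fw (n : ℕ) (i : Fin n) : Fin n → ℤ := Pi.single i 1

def col (d : ℕ) (C : Matrix (Fin d) (Fin d) ℤ) (n : ℕ) (j : Fin n) : Fin n → ℤ :=
  fun i => Xmat d C n i j

def Qlat (d : ℕ) (C : Matrix (Fin d) (Fin d) ℤ) (n : ℕ) : Submodule ℤ (Fin n → ℤ) :=
  Submodule.span ℤ (Set.range (col d C n))

def lastFin (n : ℕ) (h : 0 < n) : Fin n := ⟨n - 1, by omega⟩

def ASeq (d : ℕ) (C : Matrix (Fin d) (Fin d) ℤ) (a : ℕ → ℤ) : Prop :=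
  ∀ n, d ≤ n → detX d C n ≠ 0 → ∀ i : Fin n,
    (-(Δdiff d C)) • fw n i - a (i : ℕ) • fw n (lastFin n i.pos) ∈ Qlat d C n

lemma Xmat_apply (d : ℕ) (C : Matrix (Fin d) (Fin d) ℤ) (n : ℕ) (i j : Fin n) :
    Xmat d C n i j =
      if h : (i : ℕ) < d ∧ (j : ℕ) < d then C ⟨i, h.1⟩ ⟨j, h.2⟩
      else if (i : ℕ) = (j : ℕ) then 2
      else if (i : ℕ) + 1 = (j : ℕ) ∨ (j : ℕ) + 1 = (i : ℕ) then -1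
      else 0 := rfl

lemma Xmat_val (d : ℕ) (C : Matrix (Fin d) (Fin d) ℤ) (n m : ℕ) (i j : Fin n) (i' j' : Fin m)
    (hi : (i : ℕ) = (i' : ℕ)) (hj : (j : ℕ) = (j' : ℕ)) :
    Xmat d C n i j = Xmat d C m i' j' := by
  simp only [Xmat_apply, hi, hj]

lemma detD1 (d : ℕ) (C : Matrix (Fin d) (Fin d) ℤ) (k : ℕ) :
    ((Xmat d C (k+1)).updateRow (Fin.last k) (Pi.single (Fin.last k) 1)).det = detX d C k := by
  rw [Matrix.det_succ_row _ (Fin.last k)]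
  rw [Fintype.sum_eq_single (Fin.last k)]
  · have h1 : ((Xmat d C (k+1)).updateRow (Fin.last k) (Pi.single (Fin.last k) 1)) (Fin.last k) (Fin.last k) = 1 := by
      simp [Matrix.updateRow_self]
    rw [h1]
    have h2 : ((-1 : ℤ)) ^ ((Fin.last k : ℕ) + (Fin.last k : ℕ)) = 1 :=
      Even.neg_one_pow ⟨k, by simp⟩
    rw [h2]
    have h3 : ((Xmat d C (k+1)).updateRow (Fin.last k) (Pi.single (Fin.last k) 1)).submatrix
        (Fin.last k).succAbove (Fin.last k).succAbove = Xmat d C k := by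
      ext i j
      rw [Fin.succAbove_last]
      rw [Matrix.submatrix_apply, Matrix.updateRow_ne (Fin.castSucc_lt_last i).ne]
      exact Xmat_val d C _ _ _ _ i j (Fin.coe_castSucc i) (Fin.coe_castSucc j)
    rw [h3]
    ring_nf
    rfl
  · intro j hj
    have : ((Xmat d C (k+1)).updateRow (Fin.last k) (Pi.single (Fin.last k) 1)) (Fin.last k) j = 0 := by
      rw [Matrix.updateRow_self, Pi.single_eq_of_ne hj]
    rw [this]; ring


lemma detD1c (d : ℕ) (C : Matrix (Fin d) (Fin d) ℤ) (k : ℕ) :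
    ((Xmat d C (k+1)).updateCol (Fin.last k) (Pi.single (Fin.last k) 1)).det = detX d C k := by
  rw [Matrix.det_succ_column _ (Fin.last k)]
  rw [Fintype.sum_eq_single (Fin.last k)]
  · have h1 : ((Xmat d C (k+1)).updateCol (Fin.last k) (Pi.single (Fin.last k) 1)) (Fin.last k) (Fin.last k) = 1 := by
      simp [Matrix.updateCol_self]
    rw [h1]
    have h2 : ((-1 : ℤ)) ^ ((Fin.last k : ℕ) + (Fin.last k : ℕ)) = 1 :=
      Even.neg_one_pow ⟨k, by simp⟩
    rw [h2]
    have h3 : ((Xmat d C (k+1)).updateCol (Fin.last k) (Pi.single (Fin.last k) 1)).submatrix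
        (Fin.last k).succAbove (Fin.last k).succAbove = Xmat d C k := by
      ext i j
      rw [Fin.succAbove_last]
      rw [Matrix.submatrix_apply, Matrix.updateCol_ne (Fin.castSucc_lt_last j).ne]
      exact Xmat_val d C _ _ _ _ i j (Fin.coe_castSucc i) (Fin.coe_castSucc j)
    rw [h3]
    ring_nf
    rfl
  · intro i hi
    have : ((Xmat d C (k+1)).updateCol (Fin.last k) (Pi.single (Fin.last k) 1)) i (Fin.last k) = 0 := by
      rw [Matrix.updateCol_self, Pi.single_eq_of_ne hi]
    rw [this]; ring


lemma detD2 (d : ℕ) (C : Matrix (Fin d) (Fin d) ℤ) (e : ℕ) (hd : d ≤ e + 1) :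
    ((Xmat d C (e+2)).updateRow (Fin.last (e+1)) (Pi.single (Fin.last e).castSucc 1)).det
      = detX d C e := by
  set j0 : Fin (e+2) := (Fin.last e).castSucc with hj0
  rw [Matrix.det_succ_row _ (Fin.last (e+1))]
  rw [Fintype.sum_eq_single j0]
  · have h1 : ((Xmat d C (e+2)).updateRow (Fin.last (e+1)) (Pi.single j0 1)) (Fin.last (e+1)) j0 = 1 := by
      simp [Matrix.updateRow_self]
    rw [h1]
    have h2 : ((-1 : ℤ)) ^ ((Fin.last (e+1) : ℕ) + (j0 : ℕ)) = -1 := by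
      have : ((Fin.last (e+1) : ℕ) + (j0 : ℕ)) = 2*e + 1 := by
        simp [hj0, Fin.last]; omega
      rw [this]
      exact Odd.neg_one_pow ⟨e, by ring⟩
    rw [h2]
    have h3 : ((Xmat d C (e+2)).updateRow (Fin.last (e+1)) (Pi.single j0 1)).submatrix
        (Fin.last (e+1)).succAbove j0.succAbove
        = (Xmat d C (e+1)).updateCol (Fin.last e) ((-1 : ℤ) • Pi.single (Fin.last e) 1) := by
      ext i c
      rw [Matrix.submatrix_apply, Fin.succAbove_last,
        Matrix.updateRow_ne (Fin.castSucc_lt_last i).ne]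
      by_cases hc : c = Fin.last e
      · subst hc
        have hs : (j0.succAbove (Fin.last e) : ℕ) = e + 1 := by
          rw [Fin.succAbove]
          simp [hj0]
        rw [Matrix.updateCol_self]
        have hi' : (i.castSucc : ℕ) = (i : ℕ) := Fin.coe_castSucc i
        rw [Xmat_apply]
        have hne : ¬ ((i.castSucc : ℕ) < d ∧ ((j0.succAbove (Fin.last e)) : ℕ) < d) := by
          rw [hs]; omega
        rw [dif_neg hne]
        have hilt := i.isLt
        simp only [hi', hs, Pi.smul_apply, Pi.single_apply, smul_eq_mul, Fin.ext_iff,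
          Fin.val_last]
        split_ifs <;> omega
      · have hclt : (c : ℕ) < e := by
          have := c.isLt
          have : (c : ℕ) ≠ e := fun h => hc (Fin.ext (by simp [Fin.last, h]))
          omega
        have hs : (j0.succAbove c : ℕ) = (c : ℕ) := by
          rw [Fin.succAbove]
          rw [if_pos]
          · simp
          · simp [hj0, Fin.lt_def, hclt]
        rw [Matrix.updateCol_ne hc]
        exact Xmat_val d C _ _ _ _ i c (Fin.coe_castSucc i) hs
    rw [h3, Matrix.det_updateCol_smul, detD1c]
    ring
  · intro j hj
    have : ((Xmat d C (e+2)).updateRow (Fin.last (e+1)) (Pi.single j0 1)) (Fin.last (e+1)) j = 0 := by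
      rw [Matrix.updateRow_self, Pi.single_eq_of_ne hj]
    rw [this]; ring


lemma detRec (d : ℕ) (C : Matrix (Fin d) (Fin d) ℤ) (e : ℕ) (hd : d ≤ e + 1) :
    detX d C (e+2) = 2 * detX d C (e+1) - detX d C e := by
  have hrow : Xmat d C (e+2) (Fin.last (e+1))
      = (2 : ℤ) • Pi.single (Fin.last (e+1)) 1 + (-1 : ℤ) • Pi.single ((Fin.last e).castSucc) 1 := by
    funext j
    have hjl := j.isLt
    rw [Xmat_apply, dif_neg (by simp [Fin.val_last]; omega)]
    simp only [Pi.add_apply, Pi.smul_apply, Pi.single_apply, smul_eq_mul, Fin.ext_iff,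
      Fin.val_last, Fin.coe_castSucc]
    split_ifs <;> omega
  have : detX d C (e+2) = ((Xmat d C (e+2)).updateRow (Fin.last (e+1))
      ((2 : ℤ) • Pi.single (Fin.last (e+1)) 1 + (-1 : ℤ) • Pi.single ((Fin.last e).castSucc) 1)).det := by
    rw [← hrow, Matrix.updateRow_eq_self]
    rfl
  rw [this, Matrix.det_updateRow_add, Matrix.det_updateRow_smul, Matrix.det_updateRow_smul,
    detD1, detD2 d C e hd]
  ring


lemma APZ (e : ℕ) (C : Matrix (Fin (e+1)) (Fin (e+1)) ℤ) :
    ∀ k : ℕ, detX (e+1) C (e + k) = detX (e+1) C e + (k : ℤ) * Δdiff (e+1) C := by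
  intro k
  induction k using Nat.strong_induction_on with
  | _ k ih =>
    match k with
    | 0 => simp
    | 1 =>
      have : Δdiff (e+1) C = detX (e+1) C (e+1) - detX (e+1) C e := by
        simp [Δdiff]
      rw [this]; push_cast; ring
    | (k+2) =>
      have h1 := ih (k+1) (by omega)
      have h0 := ih k (by omega)
      have hr := detRec (e+1) C (e + k) (by omega)
      have he : e + (k + 2) = (e + k) + 2 := by ring
      have he1 : e + (k + 1) = (e + k) + 1 := by ring
      rw [he, hr, ← he1, h1, h0]
      push_cast; ring

lemma APat (e : ℕ) (C : Matrix (Fin (e+1)) (Fin (e+1)) ℤ) (x : ℕ) (hx : e ≤ x) :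
    detX (e+1) C x = detX (e+1) C e + ((x : ℤ) - (e : ℤ)) * Δdiff (e+1) C := by
  have h := APZ e C (x - e)
  rw [show e + (x - e) = x by omega] at h
  rw [h]
  have : ((x - e : ℕ) : ℤ) = (x : ℤ) - e := by omega
  rw [this]

lemma APstep (e : ℕ) (C : Matrix (Fin (e+1)) (Fin (e+1)) ℤ) (x : ℕ) (hx : e ≤ x) :
    detX (e+1) C (x+1) = detX (e+1) C x + Δdiff (e+1) C := by
  rw [APat e C (x+1) (by omega), APat e C x hx]; push_cast; ring


/-- indicator vector at natural index `j` -/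
def Evec (m j : ℕ) : Fin m → ℤ := fun k => if (k : ℕ) = j then 1 else 0

lemma fw_eq_Evec (m : ℕ) (i : Fin m) : fw m i = Evec m (i : ℕ) := by
  funext k
  rw [fw, Pi.single_apply, Evec]
  simp [Fin.ext_iff]

lemma col_mem (d : ℕ) (C : Matrix (Fin d) (Fin d) ℤ) (m : ℕ) (j : Fin m) :
    col d C m j ∈ Qlat d C m :=
  Submodule.subset_span ⟨j, rfl⟩

lemma mulVec_mem (d : ℕ) (C : Matrix (Fin d) (Fin d) ℤ) (m : ℕ) (x : Fin m → ℤ) :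
    (Xmat d C m).mulVec x ∈ Qlat d C m := by
  have : (Xmat d C m).mulVec x = ∑ j : Fin m, x j • col d C m j := by
    funext i
    simp [Matrix.mulVec, dotProduct, col, Finset.sum_apply, mul_comm]
  rw [this]
  exact Submodule.sum_mem _ fun j _ => Submodule.smul_mem _ _ (col_mem d C m j)

lemma memD (d : ℕ) (C : Matrix (Fin d) (Fin d) ℤ) (m : ℕ) :
    detX d C (m+1) • Evec (m+1) m ∈ Qlat d C (m+1) := by
  have h : detX d C (m+1) • Evec (m+1) m
      = (Xmat d C (m+1)).mulVec (fun i => (Xmat d C (m+1)).adjugate i (Fin.last m)) := by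
    funext i
    have : (Xmat d C (m+1)).mulVec (fun i => (Xmat d C (m+1)).adjugate i (Fin.last m)) i
        = (Xmat d C (m+1) * (Xmat d C (m+1)).adjugate) i (Fin.last m) := by
      simp [Matrix.mulVec, dotProduct, Matrix.mul_apply]
    rw [this, Matrix.mul_adjugate]
    simp only [Matrix.smul_apply, Matrix.one_apply, smul_eq_mul, Pi.smul_apply, Evec,
      Fin.ext_iff, Fin.val_last]
    split_ifs <;> simp [detX]
  rw [h]
  exact mulVec_mem d C (m+1) _

lemma colE (d : ℕ) (C : Matrix (Fin d) (Fin d) ℤ) (m j : ℕ) (hd : d ≤ j) (hj : j < m) (hj1 : 1 ≤ j) :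
    col d C m ⟨j, hj⟩ = fun k => 2 * Evec m j k - Evec m (j-1) k - Evec m (j+1) k := by
  funext k
  rw [col, Xmat_apply, dif_neg (by simp only [Fin.val_mk]; omega)]
  simp only [Evec]
  split_ifs <;> omega


lemma key (e : ℕ) (C : Matrix (Fin (e+1)) (Fin (e+1)) ℤ) (m' : ℕ) (hm : e ≤ m') :
    ∀ t j : ℕ, j + t = m' → e ≤ j →
      ((-(Δdiff (e+1) C)) • Evec (m'+1) j - detX (e+1) C j • Evec (m'+1) m')
        ∈ Qlat (e+1) C (m'+1) := by
  intro t
  induction t using Nat.strong_induction_on with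
  | _ t ih =>
    intro j hjt hej
    match t, hjt with
    | 0, hjt =>
      have hj : j = m' := by omega
      subst hj
      have hstep := APstep e C j hej
      have hv : (-(Δdiff (e+1) C)) • Evec (j+1) j - detX (e+1) C j • Evec (j+1) j
          = (-1 : ℤ) • (detX (e+1) C (j+1) • Evec (j+1) j) := by
        funext k
        simp only [Pi.sub_apply, Pi.smul_apply, smul_eq_mul, Evec]
        split_ifs <;> linarith
      rw [hv]
      exact Submodule.smul_mem _ _ (memD (e+1) C j)
    | 1, hjt =>
      have hm' : m' = j + 1 := by omega
      subst hm'
      have hs1 := APstep e C j hej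
      have hs2 := APstep e C (j+1) (by omega)
      have hc := colE (e+1) C (j+2) (j+1) (by omega) (by omega) (by omega)
      have hv : (-(Δdiff (e+1) C)) • Evec (j+2) j - detX (e+1) C j • Evec (j+2) (j+1)
          = Δdiff (e+1) C • col (e+1) C (j+2) ⟨j+1, by omega⟩
            + (-1 : ℤ) • (detX (e+1) C (j+2) • Evec (j+2) (j+1)) := by
        funext k
        rw [hc]
        simp only [Pi.sub_apply, Pi.add_apply, Pi.smul_apply, smul_eq_mul, Evec,
          Nat.add_sub_cancel]
        have hk := k.isLt
        split_ifs <;> first | linarith | (exfalso; omega)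
      rw [hv]
      exact Submodule.add_mem _ (Submodule.smul_mem _ _ (col_mem _ _ _ _))
        (Submodule.smul_mem _ _ (memD (e+1) C (j+1)))
    | (t+2), hjt =>
      have ih1 := ih (t+1) (by omega) (j+1) (by omega) (by omega)
      have ih2 := ih t (by omega) (j+2) (by omega) (by omega)
      have hs1 := APstep e C j hej
      have hs2 := APstep e C (j+1) (by omega)
      have hc := colE (e+1) C (m'+1) (j+1) (by omega) (by omega) (by omega)
      have hv : (-(Δdiff (e+1) C)) • Evec (m'+1) j - detX (e+1) C j • Evec (m'+1) m'
          = (2 : ℤ) • ((-(Δdiff (e+1) C)) • Evec (m'+1) (j+1) - detX (e+1) C (j+1) • Evec (m'+1) m')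
            - ((-(Δdiff (e+1) C)) • Evec (m'+1) (j+2) - detX (e+1) C (j+2) • Evec (m'+1) m')
            + Δdiff (e+1) C • col (e+1) C (m'+1) ⟨j+1, by omega⟩ := by
        funext k
        rw [hc]
        simp only [Pi.sub_apply, Pi.add_apply, Pi.smul_apply, smul_eq_mul, Evec,
          Nat.add_sub_cancel]
        have hk := k.isLt
        split_ifs <;> first | linarith | (exfalso; omega)
      rw [hv]
      exact Submodule.add_mem _
        (Submodule.sub_mem _ (Submodule.smul_mem _ _ ih1) ih2)
        (Submodule.smul_mem _ _ (col_mem _ _ _ _))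


-- divisibility from membership of s • Evec at last index
lemma dvd_of_smul_last_mem (d : ℕ) (C : Matrix (Fin d) (Fin d) ℤ) (m' : ℕ) (s : ℤ)
    (h : s • Evec (m'+1) m' ∈ Qlat d C (m'+1)) :
    detX d C (m'+1) ∣ s * detX d C m' := by
  set M := Xmat d C (m'+1) with hM
  have hL : ∀ v ∈ Qlat d C (m'+1), detX d C (m'+1) ∣ (M.adjugate.mulVec v) (Fin.last m') := by
    intro v hv
    induction hv using Submodule.span_induction with
    | mem x hx =>
      obtain ⟨j, rfl⟩ := hx
      have : (M.adjugate.mulVec (col d C (m'+1) j)) (Fin.last m')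
          = (M.adjugate * M) (Fin.last m') j := by
        simp [Matrix.mulVec, dotProduct, Matrix.mul_apply, col, hM]
      rw [this, Matrix.adjugate_mul]
      simp only [Matrix.smul_apply, Matrix.one_apply, smul_eq_mul]
      split_ifs <;> simp [detX, hM]
    | zero => simp [Matrix.mulVec_zero]
    | add x y _ _ hx hy =>
      rw [Matrix.mulVec_add]
      exact dvd_add hx hy
    | smul r x _ hx =>
      rw [Matrix.mulVec_smul]
      exact Dvd.dvd.mul_left hx r
  have := hL _ h
  have heval : (M.adjugate.mulVec (s • Evec (m'+1) m')) (Fin.last m')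
      = s * M.adjugate (Fin.last m') (Fin.last m') := by
    rw [Matrix.mulVec_smul]
    simp only [Pi.smul_apply, smul_eq_mul]
    congr 1
    have : M.adjugate.mulVec (Evec (m'+1) m') (Fin.last m')
        = ∑ c : Fin (m'+1), M.adjugate (Fin.last m') c * (if (c : ℕ) = m' then 1 else 0) := by
      simp [Matrix.mulVec, dotProduct, Evec]
    rw [this, Finset.sum_eq_single (Fin.last m')]
    · simp
    · intro c _ hc
      rw [if_neg (fun h => hc (Fin.ext (by simp [h]))), mul_zero]
    · simp
  rw [heval] at this
  rwa [Matrix.adjugate_apply, detD1] at this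

lemma cong (e : ℕ) (C : Matrix (Fin (e+1)) (Fin (e+1)) ℤ) (hX : Extensible (e+1) C)
    (a : ℕ → ℤ) (ha : ASeq (e+1) C a) (m' : ℕ) (hm : e ≤ m')
    (hdet : detX (e+1) C (m'+1) ≠ 0) (j : ℕ) (hj1 : e ≤ j) (hj2 : j < m'+1) :
    detX (e+1) C (m'+1) ∣ (a j - detX (e+1) C j) := by
  have h1 := ha (m'+1) (by omega) hdet ⟨j, hj2⟩
  rw [fw_eq_Evec, fw_eq_Evec] at h1
  have hlast : ((lastFin (m'+1) (Fin.pos ⟨j, hj2⟩)) : ℕ) = m' := rfl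
  rw [hlast] at h1
  have h2 := key e C m' hm (m' - j) j (by omega) hj1
  have h3 := Submodule.sub_mem _ h2 h1
  have hv : ((-(Δdiff (e+1) C)) • Evec (m'+1) j - detX (e+1) C j • Evec (m'+1) m')
      - ((-(Δdiff (e+1) C)) • Evec (m'+1) (⟨j, hj2⟩ : Fin (m'+1)) - a (⟨j, hj2⟩ : Fin (m'+1)) • Evec (m'+1) m')
      = (a j - detX (e+1) C j) • Evec (m'+1) m' := by
    funext k
    simp only [Pi.sub_apply, Pi.smul_apply, smul_eq_mul, Evec, Fin.val_mk]
    split_ifs <;> ring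
  rw [hv] at h3
  have hdvd := dvd_of_smul_last_mem (e+1) C m' _ h3
  -- coprimality of detX (m'+1) and detX m'
  have hcop0 : IsCoprime (Δdiff (e+1) C) (detX (e+1) C (e+1)) := hX.2.2
  have hΔm : IsCoprime (Δdiff (e+1) C) (detX (e+1) C (m'+1)) := by
    have h := hcop0.add_mul_left_right ((m' : ℤ) - e)
    have : detX (e+1) C (m'+1) = detX (e+1) C (e+1) + Δdiff (e+1) C * ((m' : ℤ) - e) := by
      rw [APat e C (m'+1) (by omega), APat e C (e+1) (by omega)]
      push_cast; ring
    rwa [← this] at h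
  have hcop : IsCoprime (detX (e+1) C (m'+1)) (detX (e+1) C m') := by
    have h := hΔm.symm.neg_right.add_mul_left_right 1
    have : detX (e+1) C m' = -Δdiff (e+1) C + detX (e+1) C (m'+1) * 1 := by
      have := APstep e C m' hm
      linarith
    rwa [← this] at h
  exact hcop.dvd_of_dvd_mul_right hdvd


lemma avals (e : ℕ) (C : Matrix (Fin (e+1)) (Fin (e+1)) ℤ) (hX : Extensible (e+1) C)
    (a : ℕ → ℤ) (ha : ASeq (e+1) C a) (j : ℕ) (hj : e ≤ j) :
    a j = detX (e+1) C j := by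
  set s : ℤ := a j - detX (e+1) C j with hs
  set D : ℤ := detX (e+1) C e with hD
  set k : ℕ := s.natAbs + D.natAbs + j with hk
  set T : ℤ := detX (e+1) C (e + k + 1) with hT
  have hTval : T = D + ((k : ℤ) + 1) * Δdiff (e+1) C := by
    rw [hT, APat e C (e+k+1) (by omega)]
    push_cast; ring
  have hΔ1 : (1 : ℤ) ≤ |Δdiff (e+1) C| := Int.one_le_abs hX.1
  have h1 : |((k:ℤ)+1) * Δdiff (e+1) C| = ((k:ℤ)+1) * |Δdiff (e+1) C| := by
    rw [abs_mul, abs_of_nonneg (by positivity)]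
  have h2 : |((k:ℤ)+1) * Δdiff (e+1) C| ≤ |T| + |D| := by
    have : ((k:ℤ)+1) * Δdiff (e+1) C = T + (-D) := by rw [hTval]; ring
    rw [this]
    calc |T + (-D)| ≤ |T| + |-D| := abs_add_le _ _
      _ = |T| + |D| := by rw [abs_neg]
  have h3 : (k:ℤ)+1 ≤ ((k:ℤ)+1) * |Δdiff (e+1) C| :=
    le_mul_of_one_le_right (by positivity) hΔ1
  have habs_s : |s| = (s.natAbs : ℤ) := Int.abs_eq_natAbs s
  have habs_D : |D| = (D.natAbs : ℤ) := Int.abs_eq_natAbs D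
  have hkZ : (k : ℤ) = (s.natAbs : ℤ) + (D.natAbs : ℤ) + (j : ℤ) := by
    rw [hk]; push_cast; ring
  have hbig : |s| < |T| := by
    have hj0 : (0:ℤ) ≤ (j:ℤ) := by positivity
    linarith
  have hTne : T ≠ 0 := by
    intro h0
    rw [h0] at hbig
    simp at hbig
    have := abs_nonneg s
    omega
  have hdvd : T ∣ s := cong e C hX a ha (e + k) (by omega) hTne j hj (by omega)
  have : s = 0 := Int.eq_zero_of_abs_lt_dvd ((abs_dvd T s).mpr hdvd) hbig
  linarith [hs ▸ this]

/-- For the sequence `(a_i)` of the congruence property and `1 ≤ i ≤ n-d+1`: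
`a_{n-i+1} = det(C(X_{n-i})) = det(C(X_n)) - i·Δ`, so in particular
`a_{n-i+1} ≡ -i·Δ (mod det C(X_n))`.  (In 0-based indexing the paper's
`a_{n-i+1}` is `a (n-i)`.) -/
theorem tensor_stab_a_tail (d : ℕ) (hd : 1 ≤ d)
    (C : Matrix (Fin d) (Fin d) ℤ) (hX : Extensible d C)
    (a : ℕ → ℤ) (ha : ASeq d C a)
    (n : ℕ) (hn : d ≤ n) (i : ℕ) (hi1 : 1 ≤ i) (hi2 : i ≤ n - d + 1) :
    a (n - i) = detX d C (n - i) ∧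
    detX d C (n - i) = detX d C n - (i : ℤ) * Δdiff d C ∧
    (detX d C n) ∣ (a (n - i) + (i : ℤ) * Δdiff d C) := by
  obtain ⟨e, rfl⟩ : ∃ e, d = e + 1 := ⟨d - 1, by omega⟩
  have hj : e ≤ n - i := by omega
  have p1 : a (n - i) = detX (e+1) C (n - i) := avals e C hX a ha (n - i) hj
  have p2 : detX (e+1) C (n - i) = detX (e+1) C n - (i : ℤ) * Δdiff (e+1) C := by
    rw [APat e C (n-i) hj, APat e C n (by omega)]
    have : ((n - i : ℕ) : ℤ) = (n : ℤ) - (i : ℤ) := by omega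
    rw [this]; ring
  refine ⟨p1, p2, ?_⟩
  have : a (n - i) + (i : ℤ) * Δdiff (e+1) C = detX (e+1) C n := by
    rw [p1]; linarith
  rw [this]
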